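/- For the broadcast process on the infinite rooted d-regular tree with q ≥ 3 communities, there exists a constant C(q) such that if λ²d > C(q) and λ is large enough that p < 0.01, then for every fixed d there exists k₀ = k₀(d, λ, q) so that for all k ≥ k₀, E_k ≥ 1 − 2(1−λ)(q−1)/(q·(0.16d − λ)). -/

import Mathlib

open MeasureTheory ProbabilityTheory Filter

/-- Transition matrix of the broadcast process. -/
noncomputable def transM (q : ℕ) (p : ℝ) (a b : Fin q) : ℝ :=
  if a = b then 1 - p else p / ((q : ℝ) - 1)

/-- The σ-algebra generated by the depth-`m` labels of the process `leaves`. -/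
noncomputable def leafAlg {Ω : Type} [MeasurableSpace Ω] {q d : ℕ}
    (leaves : List (Fin d) → Ω → Fin q) (m : ℕ) : MeasurableSpace Ω :=
  MeasurableSpace.comap (fun ω => fun f : Fin m → Fin d => leaves (List.ofFn f) ω)
    inferInstance

/-- Posterior probability that the root label equals `i`, given the depth-`m` labels. -/
noncomputable def posterior {Ω : Type} [MeasurableSpace Ω] {q d : ℕ} (μ : Measure Ω)
    (root : Ω → Fin q) (leaves : List (Fin d) → Ω → Fin q) (i : Fin q) (m : ℕ) : Ω → ℝ :=
  μ[Set.indicator {ω | root ω = i} (fun _ => (1 : ℝ)) | leafAlg leaves m]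

/-- Optimal probability of reconstructing the root from depth-`m` labels. -/
noncomputable def optRecon {Ω : Type} [MeasurableSpace Ω] {q d : ℕ} (μ : Measure Ω)
    (root : Ω → Fin q) (leaves : List (Fin d) → Ω → Fin q) (m : ℕ) : ℝ :=
  ∫ ω, ⨆ i : Fin q, posterior μ root leaves i m ω ∂μ

namespace BIM


def Lab (q d : ℕ) : ℕ → Type
  | 0 => Fin q
  | (k+1) => Fin q × (Fin d → Lab q d k)

attribute [reducible] Lab

def labFintype (q d : ℕ) : ∀ k, Fintype (Lab q d k)
  | 0 => inferInstanceAs (Fintype (Fin q))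
  | (k+1) => letI := labFintype q d k
             inferInstanceAs (Fintype (Fin q × (Fin d → Lab q d k)))

instance (q d k : ℕ) : Fintype (Lab q d k) := labFintype q d k

def labDecEq (q d : ℕ) : ∀ k, DecidableEq (Lab q d k)
  | 0 => inferInstanceAs (DecidableEq (Fin q))
  | (k+1) => letI := labDecEq q d k
             inferInstanceAs (DecidableEq (Fin q × (Fin d → Lab q d k)))

instance (q d k : ℕ) : DecidableEq (Lab q d k) := labDecEq q d k

def rootL (q d : ℕ) : ∀ k, Lab q d k → Fin q
  | 0, t => t
  | (_+1), t => t.1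

def evalR (q d : ℕ) : ∀ k, Lab q d k → List (Fin d) → Fin q
  | 0, t, _ => t
  | (_+1), t, [] => t.1
  | (k+1), t, (c :: u) => evalR q d k (t.2 c) u

def evalL (q d k : ℕ) (t : Lab q d k) (v : List (Fin d)) : Fin q :=
  evalR q d k t v.reverse

lemma evalL_nil (q d k : ℕ) (t : Lab q d k) : evalL q d k t List.nil = rootL q d k t := by
  cases k <;> rfl

lemma evalL_append (q d k : ℕ) (t : Lab q d (k+1)) (v : List (Fin d)) (c : Fin d) :
    evalL q d (k+1) t (v ++ [c]) = evalL q d k (t.2 c) v := by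
  simp only [evalL, List.reverse_append, List.reverse_cons, List.reverse_nil, List.nil_append,
    List.singleton_append]
  rfl

def theta (q d : ℕ) : ∀ k, (List (Fin d) → Fin q) → Lab q d k
  | 0, ℓ => ℓ []
  | (k+1), ℓ => (ℓ [], fun c => theta q d k (fun v => ℓ (v ++ [c])))

lemma rootL_theta (q d k : ℕ) (ℓ : List (Fin d) → Fin q) :
    rootL q d k (theta q d k ℓ) = ℓ [] := by
  cases k <;> rfl

lemma theta_eq_iff (q d : ℕ) : ∀ (k : ℕ) (ℓ : List (Fin d) → Fin q) (t : Lab q d k),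
    theta q d k ℓ = t ↔ ∀ v : List (Fin d), v.length ≤ k → ℓ v = evalL q d k t v
  | 0, ℓ, t => by
    constructor
    · intro h v hv
      have : v = [] := List.length_eq_zero_iff.mp (Nat.le_zero.mp hv)
      subst this
      exact h
    · intro h
      exact h [] (by simp)
  | (k+1), ℓ, t => by
    obtain ⟨a, f⟩ : Fin q × (Fin d → Lab q d k) := t
    constructor
    · intro h v hv
      have h1 : ℓ [] = a := congrArg Prod.fst h
      have h2 : ∀ c, theta q d k (fun v => ℓ (v ++ [c])) = f c := fun c =>
        congrFun (congrArg Prod.snd h) c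
      rcases List.eq_nil_or_concat v with rfl | ⟨u, c, rfl⟩
      · exact h1.trans (evalL_nil q d (k+1) (a, f)).symm
      · rw [List.concat_eq_append] at hv ⊢
        refine Eq.trans ?_ (evalL_append q d k (a, f) u c).symm
        have hu : u.length ≤ k := by simpa using hv
        exact (theta_eq_iff q d k _ (f c)).mp (h2 c) u hu
    · intro h
      have h0 : ℓ [] = a := by
        have := h [] (by simp)
        exact this.trans (evalL_nil q d (k+1) (a, f))
      show (ℓ [], fun c => theta q d k (fun v => ℓ (v ++ [c]))) = (a, f)
      refine Prod.ext h0 (funext fun c => ?_)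
      refine (theta_eq_iff q d k _ (f c)).mpr (fun v hv => ?_)
      have := h (v ++ [c]) (by simpa using Nat.succ_le_succ hv)
      exact this.trans (evalL_append q d k (a, f) v c)


section Model

variable (q d : ℕ) (p : ℝ)

lemma transM_nonneg (hq : 3 ≤ q) (hp0 : 0 < p) (hp1 : p < 1) (a b : Fin q) :
    0 ≤ transM q p a b := by
  have hq' : (2:ℝ) ≤ (q:ℝ) - 1 := by
    have : (3:ℝ) ≤ (q:ℝ) := by exact_mod_cast hq
    linarith
  unfold transM
  split
  · linarith
  · positivity

lemma sum_transM (hq : 3 ≤ q) (a : Fin q) : ∑ b : Fin q, transM q p a b = 1 := by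
  have hq' : ((q:ℝ) - 1) ≠ 0 := by
    have : (3:ℝ) ≤ (q:ℝ) := by exact_mod_cast hq
    linarith
  rw [← Finset.add_sum_erase _ _ (Finset.mem_univ a)]
  have h1 : transM q p a a = 1 - p := by simp [transM]
  have h2 : ∀ b ∈ Finset.univ.erase a, transM q p a b = p / ((q:ℝ) - 1) := by
    intro b hb
    have : a ≠ b := (Finset.ne_of_mem_erase hb).symm
    simp [transM, this]
  rw [h1, Finset.sum_congr rfl h2, Finset.sum_const, Finset.card_erase_of_mem (Finset.mem_univ a)]
  simp only [Finset.card_univ, Fintype.card_fin, nsmul_eq_mul]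
  have hcast : ((q - 1 : ℕ) : ℝ) = (q:ℝ) - 1 := by
    have : 1 ≤ q := by omega
    push_cast [this]
    ring
  rw [hcast]
  field_simp
  ring

noncomputable def vW : ∀ k, Fin q → Lab q d k → ℝ
  | 0, a, t => if t = a then 1 else 0
  | (k+1), a, t => (if t.1 = a then 1 else 0) *
      ∏ c, (transM q p a (rootL q d k (t.2 c)) * vW k (rootL q d k (t.2 c)) (t.2 c))

lemma vW_nonneg (hq : 3 ≤ q) (hp0 : 0 < p) (hp1 : p < 1) :
    ∀ k (a : Fin q) (t : Lab q d k), 0 ≤ vW q d p k a t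
  | 0, a, t => by unfold vW; split <;> norm_num
  | (k+1), a, t => by
    unfold vW
    refine mul_nonneg (by split <;> norm_num) (Finset.prod_nonneg fun c _ => ?_)
    exact mul_nonneg (transM_nonneg q p hq hp0 hp1 _ _) (vW_nonneg hq hp0 hp1 k _ _)

lemma vW_ne_root (k : ℕ) (a : Fin q) (t : Lab q d k) (h : rootL q d k t ≠ a) :
    vW q d p k a t = 0 := by
  cases k with
  | zero => unfold vW; simp only [rootL] at h; simp [h]
  | succ k => unfold vW; simp only [rootL] at h; simp [h]

lemma vW_mask (k : ℕ) (a : Fin q) (t : Lab q d k) :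
    (if rootL q d k t = a then vW q d p k a t else 0) = vW q d p k a t := by
  split
  · rfl
  · exact (vW_ne_root q d p k a t (by assumption)).symm

lemma sum_lab_succ (k : ℕ) (F : Lab q d (k+1) → ℝ) :
    (∑ t : Lab q d (k+1), F t) = ∑ b : Fin q, ∑ f : Fin d → Lab q d k, F (b, f) := by
  exact Fintype.sum_prod_type (fun x : Fin q × (Fin d → Lab q d k) => F x)

lemma sum_vW (hq : 3 ≤ q) : ∀ (k : ℕ) (a : Fin q), ∑ t : Lab q d k, vW q d p k a t = 1
  | 0, a => by
    unfold vW
    simp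
  | (k+1), a => by
    have key : ∑ t : Lab q d k,
        transM q p a (rootL q d k t) * vW q d p k (rootL q d k t) t = 1 := by
      calc ∑ t : Lab q d k, transM q p a (rootL q d k t) * vW q d p k (rootL q d k t) t
          = ∑ t : Lab q d k, ∑ b : Fin q,
              (if rootL q d k t = b then transM q p a b * vW q d p k b t else 0) := by
            refine Finset.sum_congr rfl fun t _ => ?_
            rw [Finset.sum_ite_eq]
            simp
        _ = ∑ b : Fin q, ∑ t : Lab q d k,
              (if rootL q d k t = b then transM q p a b * vW q d p k b t else 0) :=
            Finset.sum_comm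
        _ = ∑ b : Fin q, transM q p a b := by
            refine Finset.sum_congr rfl fun b _ => ?_
            have : ∀ t : Lab q d k,
                (if rootL q d k t = b then transM q p a b * vW q d p k b t else 0)
                  = transM q p a b * vW q d p k b t := by
              intro t
              split
              · rfl
              · rw [vW_ne_root q d p k b t (by assumption), mul_zero]
            rw [Finset.sum_congr rfl fun t _ => this t, ← Finset.mul_sum,
              sum_vW hq k b, mul_one]
        _ = 1 := sum_transM q p hq a
    refine Eq.trans (sum_lab_succ q d k (vW q d p (k+1) a)) ?_
    have h1 : ∀ (b : Fin q) (f : Fin d → Lab q d k), vW q d p (k+1) a (b, f)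
        = (if b = a then 1 else 0) * ∏ c : Fin d,
            (transM q p a (rootL q d k (f c)) * vW q d p k (rootL q d k (f c)) (f c)) :=
      fun b f => rfl
    have h2 : (∑ f : Fin d → Lab q d k, ∏ c : Fin d,
        (transM q p a (rootL q d k (f c)) * vW q d p k (rootL q d k (f c)) (f c)))
        = ∏ c : Fin d, (1:ℝ) := by
      have h2' := Finset.prod_univ_sum (κ := fun _ : Fin d => Lab q d k)
        (fun _ => (Finset.univ : Finset (Lab q d k)))
        (fun c t => transM q p a (rootL q d k t) * vW q d p k (rootL q d k t) t)
      rw [← Fintype.piFinset_univ, ← h2']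
      exact Finset.prod_congr rfl fun c _ => key
    calc (∑ b : Fin q, ∑ f : Fin d → Lab q d k, vW q d p (k+1) a (b, f))
        = ∑ b : Fin q, (if b = a then 1 else 0) * ∑ f : Fin d → Lab q d k, ∏ c : Fin d,
            (transM q p a (rootL q d k (f c)) * vW q d p k (rootL q d k (f c)) (f c)) := by
          refine Finset.sum_congr rfl fun b _ => ?_
          rw [Finset.mul_sum]
          exact Finset.sum_congr rfl fun f _ => h1 b f
      _ = 1 := by rw [h2]; simp

lemma sum_transM_vW (hq : 3 ≤ q) (k : ℕ) (a : Fin q) :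
    ∑ t : Lab q d k, transM q p a (rootL q d k t) * vW q d p k (rootL q d k t) t = 1 := by
  calc ∑ t : Lab q d k, transM q p a (rootL q d k t) * vW q d p k (rootL q d k t) t
      = ∑ t : Lab q d k, ∑ b : Fin q,
          (if rootL q d k t = b then transM q p a b * vW q d p k b t else 0) := by
        refine Finset.sum_congr rfl fun t _ => ?_
        rw [Finset.sum_ite_eq]
        simp
    _ = ∑ b : Fin q, ∑ t : Lab q d k,
          (if rootL q d k t = b then transM q p a b * vW q d p k b t else 0) :=
        Finset.sum_comm
    _ = ∑ b : Fin q, transM q p a b := by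
        refine Finset.sum_congr rfl fun b _ => ?_
        have h3 : ∀ t : Lab q d k,
            (if rootL q d k t = b then transM q p a b * vW q d p k b t else 0)
              = transM q p a b * vW q d p k b t := by
          intro t
          split
          · rfl
          · rw [vW_ne_root q d p k b t (by assumption), mul_zero]
        rw [Finset.sum_congr rfl fun t _ => h3 t, ← Finset.mul_sum,
          sum_vW q d p hq k b, mul_one]
    _ = 1 := sum_transM q p hq a

def cnt (w : Fin d → Fin q) (b : Fin q) : ℕ :=
  (Finset.univ.filter (fun c => w c = b)).card

lemma exists_plur [NeZero q] (w : Fin d → Fin q) :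
    ∃ a : Fin q, ∀ b : Fin q, cnt q d w b ≤ cnt q d w a := by
  have hne : (Finset.univ : Finset (Fin q)).Nonempty := by
    have : 0 < q := Nat.pos_of_ne_zero (NeZero.ne q)
    exact ⟨⟨0, this⟩, Finset.mem_univ _⟩
  obtain ⟨a, _, ha⟩ := Finset.exists_max_image Finset.univ (cnt q d w) hne
  exact ⟨a, fun b => ha b (Finset.mem_univ b)⟩

noncomputable def plur [NeZero q] (w : Fin d → Fin q) : Fin q :=
  (exists_plur q d w).choose

lemma plur_spec [NeZero q] (w : Fin d → Fin q) (b : Fin q) :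
    cnt q d w b ≤ cnt q d w (plur q d w) :=
  (exists_plur q d w).choose_spec b

lemma cnt_add_le (w : Fin d → Fin q) (a b : Fin q) (hab : a ≠ b) :
    cnt q d w a + cnt q d w b ≤ d := by
  unfold cnt
  rw [← Finset.card_union_of_disjoint]
  · calc _ ≤ (Finset.univ : Finset (Fin d)).card := Finset.card_le_card (Finset.subset_univ _)
      _ = d := by simp
  · rw [Finset.disjoint_left]
    intro c hc1 hc2
    simp only [Finset.mem_filter] at hc1 hc2
    exact hab (hc1.2.symm.trans hc2.2)

lemma plur_of_majority [NeZero q] (w : Fin d → Fin q) (a : Fin q) (h : d < 2 * cnt q d w a) :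
    plur q d w = a := by
  by_contra hne
  have h1 := plur_spec q d w a
  have h2 := cnt_add_le q d w a (plur q d w) (Ne.symm hne)
  omega

noncomputable def maj [NeZero q] : ∀ k, Lab q d k → Fin q
  | 0, t => t
  | (k+1), t => plur q d (fun c => maj k (t.2 c))

noncomputable def er [NeZero q] (k : ℕ) (a : Fin q) : ℝ :=
  ∑ t : Lab q d k, (if maj q d k t = a then 0 else vW q d p k a t)

lemma er_nonneg [NeZero q] (hq : 3 ≤ q) (hp0 : 0 < p) (hp1 : p < 1) (k : ℕ) (a : Fin q) :
    0 ≤ er q d p k a := by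
  refine Finset.sum_nonneg fun t _ => ?_
  split
  · exact le_refl _
  · exact vW_nonneg q d p hq hp0 hp1 k a t

lemma er_zero [NeZero q] (a : Fin q) : er q d p 0 a = 0 := by
  unfold er
  refine Finset.sum_eq_zero fun t _ => ?_
  show (if (t : Fin q) = a then (0:ℝ) else if t = a then 1 else 0) = 0
  split <;> simp_all

noncomputable def gk [NeZero q] (k : ℕ) (a b : Fin q) : ℝ :=
  ∑ t : Lab q d k, (if maj q d k t = b
    then transM q p a (rootL q d k t) * vW q d p k (rootL q d k t) t else 0)

lemma gk_nonneg [NeZero q] (hq : 3 ≤ q) (hp0 : 0 < p) (hp1 : p < 1) (k : ℕ) (a b : Fin q) :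
    0 ≤ gk q d p k a b := by
  refine Finset.sum_nonneg fun t _ => ?_
  split
  · exact mul_nonneg (transM_nonneg q p hq hp0 hp1 _ _) (vW_nonneg q d p hq hp0 hp1 k _ _)
  · exact le_refl _

lemma sum_gk [NeZero q] (hq : 3 ≤ q) (k : ℕ) (a : Fin q) :
    ∑ b : Fin q, gk q d p k a b = 1 := by
  unfold gk
  rw [Finset.sum_comm]
  calc ∑ t : Lab q d k, ∑ b : Fin q, (if maj q d k t = b
        then transM q p a (rootL q d k t) * vW q d p k (rootL q d k t) t else 0)
      = ∑ t : Lab q d k, transM q p a (rootL q d k t) * vW q d p k (rootL q d k t) t := by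
        refine Finset.sum_congr rfl fun t _ => ?_
        rw [Finset.sum_ite_eq]
        simp
    _ = 1 := sum_transM_vW q d p hq k a

lemma gk_self_ge [NeZero q] (hq : 3 ≤ q) (hp0 : 0 < p) (hp1 : p < 1) (k : ℕ) (a : Fin q) :
    (1 - p) * (1 - er q d p k a) ≤ gk q d p k a a := by
  have sumsplit : ∑ t : Lab q d k, (if maj q d k t = a then vW q d p k a t else 0)
      = 1 - er q d p k a := by
    have h : ∀ t : Lab q d k, (if maj q d k t = a then vW q d p k a t else 0)
        + (if maj q d k t = a then 0 else vW q d p k a t) = vW q d p k a t := by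
      intro t; split <;> simp
    have h2 := Finset.sum_congr rfl (fun t (_ : t ∈ Finset.univ) => (h t).symm)
    rw [Finset.sum_add_distrib] at h2
    have h3 := sum_vW q d p hq k a
    unfold er
    linarith [h2.symm.trans h3]
  have step : ∑ t : Lab q d k, (if maj q d k t = a then (1-p) * vW q d p k a t else 0)
      ≤ gk q d p k a a := by
    refine Finset.sum_le_sum fun t _ => ?_
    split
    · by_cases hroot : rootL q d k t = a
      · rw [hroot]
        have : transM q p a a = 1 - p := by simp [transM]
        rw [this]
      · rw [vW_ne_root q d p k a t hroot, mul_zero]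
        exact mul_nonneg (transM_nonneg q p hq hp0 hp1 _ _) (vW_nonneg q d p hq hp0 hp1 k _ _)
    · exact le_refl _
  calc (1 - p) * (1 - er q d p k a)
      = ∑ t : Lab q d k, (if maj q d k t = a then (1-p) * vW q d p k a t else 0) := by
        rw [← sumsplit, Finset.mul_sum]
        refine Finset.sum_congr rfl fun t _ => ?_
        split <;> simp
    _ ≤ gk q d p k a a := step

lemma er_succ [NeZero q] (k : ℕ) (a : Fin q) :
    er q d p (k+1) a = ∑ w : Fin d → Fin q,
      (if plur q d w = a then 0 else ∏ c : Fin d, gk q d p k a (w c)) := by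
  have hfun : ∀ (b : Fin q) (f : Fin d → Lab q d k),
      (if maj q d (k+1) (b, f) = a then (0:ℝ) else vW q d p (k+1) a (b, f))
      = (if b = a then 1 else 0) *
        (if plur q d (fun c => maj q d k (f c)) = a then 0
         else ∏ c : Fin d, (transM q p a (rootL q d k (f c))
            * vW q d p k (rootL q d k (f c)) (f c))) := by
    intro b f
    show (if plur q d (fun c => maj q d k (f c)) = a then (0:ℝ)
        else (if b = a then 1 else 0) * ∏ c : Fin d, (transM q p a (rootL q d k (f c))
            * vW q d p k (rootL q d k (f c)) (f c))) = _
    split <;> ring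
  unfold er
  refine Eq.trans (sum_lab_succ q d k (fun t => if maj q d (k+1) t = a then (0:ℝ) else vW q d p (k+1) a t)) ?_
  calc ∑ b : Fin q, ∑ f : Fin d → Lab q d k,
        (if maj q d (k+1) (b, f) = a then (0:ℝ) else vW q d p (k+1) a (b, f))
      = ∑ b : Fin q, (if b = a then 1 else 0) * ∑ f : Fin d → Lab q d k,
          (if plur q d (fun c => maj q d k (f c)) = a then 0
           else ∏ c : Fin d, (transM q p a (rootL q d k (f c))
              * vW q d p k (rootL q d k (f c)) (f c))) := by
        refine Finset.sum_congr rfl fun b _ => ?_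
        rw [Finset.mul_sum]
        exact Finset.sum_congr rfl fun f _ => hfun b f
    _ = ∑ f : Fin d → Lab q d k,
          (if plur q d (fun c => maj q d k (f c)) = a then 0
           else ∏ c : Fin d, (transM q p a (rootL q d k (f c))
              * vW q d p k (rootL q d k (f c)) (f c))) := by
        simp only [boole_mul]
        rw [Finset.sum_ite_eq' Finset.univ a]
        simp
    _ = ∑ f : Fin d → Lab q d k, ∑ w : Fin d → Fin q,
          (if (fun c => maj q d k (f c)) = w then
            (if plur q d w = a then 0
             else ∏ c : Fin d, (transM q p a (rootL q d k (f c))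
                * vW q d p k (rootL q d k (f c)) (f c))) else 0) := by
        refine Finset.sum_congr rfl fun f _ => ?_
        rw [Finset.sum_ite_eq]
        simp
    _ = ∑ w : Fin d → Fin q, ∑ f : Fin d → Lab q d k,
          (if (fun c => maj q d k (f c)) = w then
            (if plur q d w = a then 0
             else ∏ c : Fin d, (transM q p a (rootL q d k (f c))
                * vW q d p k (rootL q d k (f c)) (f c))) else 0) := Finset.sum_comm
    _ = ∑ w : Fin d → Fin q,
          (if plur q d w = a then 0 else ∏ c : Fin d, gk q d p k a (w c)) := by
        refine Finset.sum_congr rfl fun w _ => ?_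
        by_cases hw : plur q d w = a
        · simp [hw]
        · rw [if_neg hw]
          have hterm : ∀ f : Fin d → Lab q d k,
              (if (fun c => maj q d k (f c)) = w then
                (if plur q d w = a then (0:ℝ)
                 else ∏ c : Fin d, (transM q p a (rootL q d k (f c))
                    * vW q d p k (rootL q d k (f c)) (f c))) else 0)
              = ∏ c : Fin d, (if maj q d k (f c) = w c
                  then transM q p a (rootL q d k (f c))
                    * vW q d p k (rootL q d k (f c)) (f c) else 0) := by
            intro f
            rw [if_neg hw]
            by_cases hf : (fun c => maj q d k (f c)) = w
            · rw [if_pos hf]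
              exact (Finset.prod_congr rfl fun c _ => by rw [if_pos (congrFun hf c)]).symm
            · rw [if_neg hf]
              obtain ⟨c, hc⟩ := Function.ne_iff.mp hf
              refine (Finset.prod_eq_zero (Finset.mem_univ c) ?_).symm
              exact if_neg hc
          rw [Finset.sum_congr rfl fun f _ => hterm f]
          have hps := Finset.prod_univ_sum (κ := fun _ : Fin d => Lab q d k)
            (fun _ => (Finset.univ : Finset (Lab q d k)))
            (fun c t => if maj q d k t = w c
              then transM q p a (rootL q d k t) * vW q d p k (rootL q d k t) t else 0)
          rw [Fintype.piFinset_univ] at hps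
          rw [← hps]
          rfl

lemma cheb [NeZero q] (hd : 0 < d) (g : Fin q → ℝ) (hg0 : ∀ b, 0 ≤ g b)
    (hg1 : ∑ b : Fin q, g b = 1) (a : Fin q) (eta0 : ℝ) (hetale : 1 - g a ≤ eta0)
    (heta2 : eta0 < 1/2) :
    ∑ w : Fin d → Fin q, (if plur q d w = a then 0 else ∏ c : Fin d, g (w c))
      ≤ eta0 / (d * (1/2 - eta0)^2) := by
  have hdR : (0:ℝ) < d := by exact_mod_cast hd
  set η : ℝ := 1 - g a with hη
  have hga1 : g a ≤ 1 := by
    rw [← hg1]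
    exact Finset.single_le_sum (fun x _ => hg0 x) (Finset.mem_univ a)
  have hη0 : 0 ≤ η := by simp [hη]; linarith
  have heta0 : 0 ≤ eta0 := le_trans hη0 hetale
  set b : Fin q → ℝ := fun x => if x = a then 0 else 1 with hb
  have hbval : ∀ x, b x = 1 - (if x = a then 1 else 0) := by
    intro x; simp only [hb]; split <;> norm_num
  have F1 : ∑ x : Fin q, b x * g x = η := by
    have : ∀ x : Fin q, b x * g x = g x - (if x = a then g x else 0) := by
      intro x; simp only [hb]; split <;> ring
    rw [Finset.sum_congr rfl fun x _ => this x, Finset.sum_sub_distrib, hg1,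
      Finset.sum_ite_eq' Finset.univ a]
    simp [hη]
  have F0 : ∑ x : Fin q, (b x - η) * g x = 0 := by
    have : ∀ x : Fin q, (b x - η) * g x = b x * g x - η * g x := fun x => by ring
    rw [Finset.sum_congr rfl fun x _ => this x, Finset.sum_sub_distrib, F1, ← Finset.mul_sum,
      hg1]
    ring
  have F2 : ∑ x : Fin q, (b x - η) * (b x - η) * g x = η - η^2 := by
    have hbsq : ∀ x, b x * b x = b x := by
      intro x; simp only [hb]; split <;> norm_num
    have : ∀ x : Fin q, (b x - η) * (b x - η) * g x
        = b x * g x - 2 * η * (b x * g x) + η^2 * g x := by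
      intro x
      have h := hbsq x
      linear_combination g x * h
    rw [Finset.sum_congr rfl fun x _ => this x]
    rw [Finset.sum_add_distrib, Finset.sum_sub_distrib, ← Finset.mul_sum, ← Finset.mul_sum,
      F1, hg1]
    ring
  have hPS : ∀ u : Fin d → Fin q → ℝ,
      (∑ w : Fin d → Fin q, ∏ c : Fin d, u c (w c)) = ∏ c : Fin d, ∑ x : Fin q, u c x := by
    intro u
    have h := Finset.prod_univ_sum (κ := fun _ : Fin d => Fin q)
      (fun _ => (Finset.univ : Finset (Fin q))) u
    rw [Fintype.piFinset_univ] at h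
    exact h.symm
  set M : (Fin d → Fin q) → ℝ := fun w => ∏ c : Fin d, g (w c) with hM
  have hM0 : ∀ w, 0 ≤ M w := fun w => Finset.prod_nonneg fun c _ => hg0 _
  set X : (Fin d → Fin q) → ℝ := fun w => ∑ c : Fin d, b (w c) with hX
  set τ : ℝ := d * (1/2 - eta0) with hτ
  have hτpos : 0 < τ := by
    apply mul_pos hdR
    linarith
  -- second moment identity
  have hzsum : ∀ w, X w - d * η = ∑ c : Fin d, (b (w c) - η) := by
    intro w
    rw [Finset.sum_sub_distrib]
    simp [hX]
  have S2 : ∑ w : Fin d → Fin q, (X w - d*η) * (X w - d*η) * M w = d * (η - η^2) := by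
    have hsq : ∀ w, (X w - d*η) * (X w - d*η) * M w
        = ∑ c : Fin d, ∑ c' : Fin d, ((b (w c) - η) * (b (w c') - η) * M w) := by
      intro w
      rw [hzsum w, Finset.sum_mul_sum, Finset.sum_mul]
      exact Finset.sum_congr rfl fun c _ => by rw [Finset.sum_mul]
    rw [Finset.sum_congr rfl fun w _ => hsq w]
    rw [Finset.sum_comm]
    have hswap : ∀ c : Fin d, (∑ w : Fin d → Fin q, ∑ c' : Fin d,
        ((b (w c) - η) * (b (w c') - η) * M w))
        = ∑ c' : Fin d, ∑ w : Fin d → Fin q, ((b (w c) - η) * (b (w c') - η) * M w) :=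
      fun c => Finset.sum_comm
    rw [Finset.sum_congr rfl fun c _ => hswap c]
    have hinner : ∀ c c' : Fin d, (∑ w : Fin d → Fin q, ((b (w c) - η) * (b (w c') - η) * M w))
        = if c = c' then η - η^2 else 0 := by
      intro c c'
      have hpsi : ∀ w : Fin d → Fin q, (b (w c) - η) * (b (w c') - η) * M w
          = ∏ c'' : Fin d, ((if c'' = c then b (w c'') - η else 1)
              * ((if c'' = c' then b (w c'') - η else 1) * g (w c''))) := by
        intro w
        rw [Finset.prod_mul_distrib, Finset.prod_mul_distrib]
        rw [Finset.prod_ite_eq' Finset.univ c (fun c'' => b (w c'') - η),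
          Finset.prod_ite_eq' Finset.univ c' (fun c'' => b (w c'') - η)]
        simp [hM, mul_assoc]
      rw [Finset.sum_congr rfl fun w _ => hpsi w,
        hPS (fun c'' x => (if c'' = c then b x - η else 1)
          * ((if c'' = c' then b x - η else 1) * g x))]
      by_cases hcc : c = c'
      · subst hcc
        rw [if_pos rfl]
        have hval : ∀ c'' : Fin d, (∑ x : Fin q, ((if c'' = c then b x - η else 1)
            * ((if c'' = c then b x - η else 1) * g x)))
            = if c'' = c then η - η^2 else 1 := by
          intro c''
          by_cases h : c'' = c
          · subst h
            rw [if_pos rfl, ← F2]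
            refine Finset.sum_congr rfl fun x _ => ?_
            rw [if_pos rfl]
            ring
          · rw [if_neg h]
            calc ∑ x : Fin q, ((if c'' = c then b x - η else 1)
                  * ((if c'' = c then b x - η else 1) * g x))
                = ∑ x : Fin q, g x :=
                  Finset.sum_congr rfl fun x _ => by rw [if_neg h]; ring
              _ = 1 := hg1
        rw [Finset.prod_congr rfl fun c'' _ => hval c'']
        rw [Finset.prod_ite_eq' Finset.univ c (fun _ => η - η^2)]
        simp
      · rw [if_neg hcc]
        refine Finset.prod_eq_zero (Finset.mem_univ c) ?_
        rw [← F0]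
        refine Finset.sum_congr rfl fun x _ => ?_
        rw [if_pos rfl, if_neg hcc]
        ring
    rw [Finset.sum_congr rfl fun c _ => Finset.sum_congr rfl fun c' _ => hinner c c']
    rw [Finset.sum_congr rfl fun c _ => Finset.sum_ite_eq Finset.univ c (fun _ => η - η^2)]
    simp [Finset.card_univ]
    ring
  -- pointwise bound
  have hpoint : ∀ w : Fin d → Fin q, (if plur q d w = a then (0:ℝ) else M w)
      ≤ ((X w - d*η) * (X w - d*η) / τ^2) * M w := by
    intro w
    by_cases hp : plur q d w = a
    · rw [if_pos hp]
      refine mul_nonneg (div_nonneg (mul_self_nonneg _) (sq_nonneg _)) (hM0 w)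
    · rw [if_neg hp]
      have hcnt : 2 * cnt q d w a ≤ d := by
        by_contra hcon
        exact hp (plur_of_majority q d w a (by omega))
      have hXc : X w = (d:ℝ) - cnt q d w a := by
        have : ∀ c : Fin d, b (w c) = 1 - (if w c = a then (1:ℝ) else 0) := fun c => hbval _
        rw [show X w = ∑ c : Fin d, b (w c) from rfl, Finset.sum_congr rfl fun c _ => this c,
          Finset.sum_sub_distrib]
        simp [cnt, Finset.sum_boole]
      have hXge : (d:ℝ)/2 ≤ X w := by
        rw [hXc]
        have : (cnt q d w a : ℝ) ≤ (d:ℝ)/2 := by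
          have : (2 * cnt q d w a : ℝ) ≤ (d:ℝ) := by exact_mod_cast hcnt
          linarith
        linarith
      have hτle : τ ≤ X w - d*η := by
        have h1 : d * η ≤ d * eta0 := by
          apply mul_le_mul_of_nonneg_left hetale (le_of_lt hdR)
        have : τ = d/2 - d*eta0 := by rw [hτ]; ring
        linarith
      have h1le : 1 ≤ (X w - d*η) * (X w - d*η) / τ^2 := by
        rw [le_div_iff₀ (by positivity)]
        have := mul_le_mul hτle hτle (le_of_lt hτpos) (le_trans (le_of_lt hτpos) hτle)
        nlinarith
      calc M w = 1 * M w := (one_mul _).symm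
        _ ≤ ((X w - d*η) * (X w - d*η) / τ^2) * M w :=
            mul_le_mul_of_nonneg_right h1le (hM0 w)
  calc ∑ w : Fin d → Fin q, (if plur q d w = a then 0 else ∏ c : Fin d, g (w c))
      ≤ ∑ w : Fin d → Fin q, ((X w - d*η) * (X w - d*η) / τ^2) * M w :=
        Finset.sum_le_sum fun w _ => hpoint w
    _ = (∑ w : Fin d → Fin q, (X w - d*η) * (X w - d*η) * M w) / τ^2 := by
        rw [Finset.sum_div]
        exact Finset.sum_congr rfl fun w _ => by ring
    _ = d * (η - η^2) / τ^2 := by rw [S2]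
    _ ≤ d * eta0 / τ^2 := by
        apply div_le_div_of_nonneg_right ?_ (by positivity)
        · apply mul_le_mul_of_nonneg_left ?_ (le_of_lt hdR)
          nlinarith
    _ = eta0 / (d * (1/2 - eta0)^2) := by
        have h12 : (0:ℝ) < 1/2 - eta0 := by linarith
        have hA := mul_pos (pow_pos hdR 2) (pow_pos h12 2)
        have hB := mul_pos hdR (pow_pos h12 2)
        rw [hτ, mul_pow, div_eq_div_iff (ne_of_gt hA) (ne_of_gt hB)]
        ring

lemma numer (dR p lam : ℝ) (hd : 1000 < dR) (hp0 : 0 < p) (hp : p < 0.01)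
    (hlam0 : 0.98 < lam) (hlam1 : lam ≤ 1) :
    0 < 0.16*dR - lam ∧ p + 2*p/(0.16*dR - lam) < 1/2 ∧
    (p + 2*p/(0.16*dR - lam)) / (dR * (1/2 - (p + 2*p/(0.16*dR - lam)))^2)
      ≤ 2*p/(0.16*dR - lam) := by
  have main : ∀ D E : ℝ, D = 0.16*dR - lam → E = 2*p/D →
      0 < D ∧ p + E < 1/2 ∧ (p + E) / (dR * (1/2 - (p + E))^2) ≤ E := by
    intro D E hDdef hEdef
    have hD : (159:ℝ) < D := by rw [hDdef]; nlinarith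
    have hDpos : 0 < D := by linarith
    have hE0 : 0 < E := by rw [hEdef]; positivity
    have hED : E * D = 2*p := by
      rw [hEdef]
      field_simp
    have hEp : E ≤ p/50 := by nlinarith
    have h1 : p + E < 1/2 := by linarith
    refine ⟨hDpos, h1, ?_⟩
    have hdpos : 0 < dR := by linarith
    have hq2 : (0.48:ℝ) ≤ 1/2 - (p+E) := by linarith
    have hsq : (0.48:ℝ)^2 ≤ (1/2 - (p+E))^2 := by nlinarith
    have hEd : 12.5 * p ≤ E * dR := by
      have hDle : D ≤ 0.16 * dR := by linarith
      have h5 := mul_le_mul_of_nonneg_left hDle (le_of_lt hE0)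
      nlinarith [hED, h5]
    have h4 : 12.5*p*(0.48^2) ≤ (E*dR)*((1/2-(p+E))^2) :=
      mul_le_mul hEd hsq (by norm_num) (by positivity)
    rw [div_le_iff₀ (by positivity)]
    nlinarith
  exact main _ _ rfl rfl

lemma er_le [NeZero q] (hq : 3 ≤ q) (hd : (1000:ℝ) < (d:ℝ)) (hp0 : 0 < p) (hp : p < 0.01)
    (lam : ℝ) (hlam0 : 0.98 < lam) (hlam1 : lam ≤ 1) :
    ∀ (k : ℕ) (a : Fin q), er q d p k a ≤ 2*p/(0.16*(d:ℝ) - lam) := by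
  have hp1 : p < 1 := by linarith
  obtain ⟨hDpos, h12, hstep⟩ := numer (d:ℝ) p lam hd hp0 hp hlam0 hlam1
  set E : ℝ := 2*p/(0.16*(d:ℝ) - lam) with hEdef
  have hE0 : 0 ≤ E := by positivity
  have hd0 : 0 < d := by
    by_contra h
    push_neg at h
    interval_cases d
    norm_num at hd
  intro k
  induction k with
  | zero => intro a; rw [er_zero]; exact hE0
  | succ k ih =>
    intro a
    rw [er_succ]
    have hetale : 1 - gk q d p k a a ≤ p + E := by
      have h1 := gk_self_ge q d p hq hp0 hp1 k a
      have h2 := er_nonneg q d p hq hp0 hp1 k a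
      have h3 := ih a
      nlinarith
    calc ∑ w : Fin d → Fin q, (if plur q d w = a then 0 else ∏ c : Fin d, gk q d p k a (w c))
        ≤ (p + E) / ((d:ℝ) * (1/2 - (p+E))^2) :=
          cheb q d hd0 (gk q d p k a) (gk_nonneg q d p hq hp0 hp1 k a)
            (sum_gk q d p hq k a) a (p + E) hetale h12
      _ ≤ E := hstep

lemma sum_vW_root (hq : 3 ≤ q) (k : ℕ) :
    ∑ t : Lab q d k, vW q d p k (rootL q d k t) t = q := by
  calc ∑ t : Lab q d k, vW q d p k (rootL q d k t) t
      = ∑ t : Lab q d k, ∑ a : Fin q, (if rootL q d k t = a then vW q d p k a t else 0) := by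
        refine Finset.sum_congr rfl fun t _ => ?_
        rw [Finset.sum_ite_eq]
        simp
    _ = ∑ a : Fin q, ∑ t : Lab q d k, (if rootL q d k t = a then vW q d p k a t else 0) :=
        Finset.sum_comm
    _ = ∑ a : Fin q, ∑ t : Lab q d k, vW q d p k a t :=
        Finset.sum_congr rfl fun a _ => Finset.sum_congr rfl fun t _ => vW_mask q d p k a t
    _ = ∑ a : Fin q, 1 := Finset.sum_congr rfl fun a _ => sum_vW q d p hq k a
    _ = q := by simp

lemma model_bad [NeZero q] (hq : 3 ≤ q) (hp0 : 0 < p) (hp1 : p < 1) (k : ℕ) (E : ℝ)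
    (hE : ∀ a, er q d p k a ≤ E) :
    ∑ t : Lab q d k, (if maj q d k t = rootL q d k t then 0
      else vW q d p k (rootL q d k t) t) ≤ q * E := by
  calc ∑ t : Lab q d k, (if maj q d k t = rootL q d k t then 0
        else vW q d p k (rootL q d k t) t)
      = ∑ t : Lab q d k, ∑ a : Fin q, (if rootL q d k t = a then
          (if maj q d k t = a then 0 else vW q d p k a t) else 0) := by
        refine Finset.sum_congr rfl fun t _ => ?_
        rw [Finset.sum_ite_eq]
        simp
    _ = ∑ a : Fin q, ∑ t : Lab q d k, (if rootL q d k t = a then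
          (if maj q d k t = a then 0 else vW q d p k a t) else 0) := Finset.sum_comm
    _ ≤ ∑ a : Fin q, er q d p k a := by
        refine Finset.sum_le_sum fun a _ => ?_
        refine Finset.sum_le_sum fun t _ => ?_
        by_cases h : rootL q d k t = a
        · rw [if_pos h]
        · rw [if_neg h]
          split
          · exact le_refl _
          · exact vW_nonneg q d p hq hp0 hp1 k a t
    _ ≤ ∑ a : Fin q, E := Finset.sum_le_sum fun a _ => hE a
    _ = q * E := by simp [mul_comm]

lemma model_main [NeZero q] (hq : 3 ≤ q) (hp0 : 0 < p) (hp1 : p < 1) (k : ℕ) (E : ℝ)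
    (hE : ∀ a, er q d p k a ≤ E) :
    1 - E ≤ ∑ t : Lab q d k, (if maj q d k t = rootL q d k t
      then (q:ℝ)⁻¹ * vW q d p k (rootL q d k t) t else 0) := by
  have hq0 : (0:ℝ) < q := by
    have : (3:ℝ) ≤ q := by exact_mod_cast hq
    linarith
  have hsplit : ∀ t : Lab q d k,
      (if maj q d k t = rootL q d k t then (q:ℝ)⁻¹ * vW q d p k (rootL q d k t) t else 0)
      = (q:ℝ)⁻¹ * vW q d p k (rootL q d k t) t
        - (q:ℝ)⁻¹ * (if maj q d k t = rootL q d k t then 0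
            else vW q d p k (rootL q d k t) t) := by
    intro t; split <;> ring
  rw [Finset.sum_congr rfl fun t _ => hsplit t, Finset.sum_sub_distrib,
    ← Finset.mul_sum, ← Finset.mul_sum, sum_vW_root q d p hq k]
  have hbad := model_bad q d p hq hp0 hp1 k E hE
  have : (q:ℝ)⁻¹ * (q:ℝ) = 1 := by field_simp
  rw [this]
  have hb2 : (q:ℝ)⁻¹ * (∑ t : Lab q d k, (if maj q d k t = rootL q d k t then 0
      else vW q d p k (rootL q d k t) t)) ≤ (q:ℝ)⁻¹ * ((q:ℝ) * E) := by
    apply mul_le_mul_of_nonneg_left hbad (by positivity)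
  have hq1 : (q:ℝ)⁻¹ * ((q:ℝ) * E) = E := by field_simp
  linarith [hb2, hq1 ▸ hb2]

lemma ofFn_snoc {d : ℕ} {n : ℕ} (g : Fin n → Fin d) (c : Fin d) :
    List.ofFn (Fin.snoc g c : Fin (n+1) → Fin d) = List.ofFn g ++ [c] := by
  rw [List.ofFn_succ']
  simp [Fin.snoc_castSucc, Fin.snoc_last, List.concat_eq_append]

noncomputable def Qprod (k : ℕ) (ℓ : List (Fin d) → Fin q) : ℝ :=
  ∏ j ∈ Finset.range k, ∏ f : Fin j → Fin d, ∏ i : Fin d,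
    transM q p (ℓ (List.ofFn f)) (ℓ (i :: List.ofFn f))

lemma Qprod_succ (k : ℕ) (ℓ : List (Fin d) → Fin q) :
    Qprod q d p (k+1) ℓ = (∏ c : Fin d, transM q p (ℓ []) (ℓ [c]))
      * ∏ c : Fin d, Qprod q d p k (fun v => ℓ (v ++ [c])) := by
  unfold Qprod
  rw [Finset.prod_range_succ', mul_comm]
  congr 1
  · -- level 0 piece
    have hcard : Fintype.card (Fin 0 → Fin d) = 1 := by simp
    have h0 : ∀ f : Fin 0 → Fin d, (∏ i : Fin d,
        transM q p (ℓ (List.ofFn f)) (ℓ (i :: List.ofFn f)))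
        = ∏ c : Fin d, transM q p (ℓ []) (ℓ [c]) := by
      intro f
      refine Finset.prod_congr rfl fun i _ => ?_
      rw [List.ofFn_zero]
    rw [Finset.prod_congr rfl fun f _ => h0 f, Finset.prod_const, Finset.card_univ, hcard,
      pow_one]
  · -- levels ≥ 1
    calc ∏ j ∈ Finset.range k, ∏ f : Fin (j+1) → Fin d, ∏ i : Fin d,
          transM q p (ℓ (List.ofFn f)) (ℓ (i :: List.ofFn f))
        = ∏ j ∈ Finset.range k, ∏ c : Fin d, ∏ g : Fin j → Fin d, ∏ i : Fin d,
            transM q p (ℓ (List.ofFn g ++ [c])) (ℓ ((i :: List.ofFn g) ++ [c])) := by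
          refine Finset.prod_congr rfl fun j _ => ?_
          have he := Fintype.prod_equiv (Fin.snocEquiv (fun _ : Fin (j+1) => Fin d)).symm
            (fun f : Fin (j+1) → Fin d => ∏ i : Fin d,
              transM q p (ℓ (List.ofFn f)) (ℓ (i :: List.ofFn f)))
            (fun x : Fin d × (Fin j → Fin d) => ∏ i : Fin d,
              transM q p (ℓ (List.ofFn x.2 ++ [x.1])) (ℓ ((i :: List.ofFn x.2) ++ [x.1])))
            ?_
          · rw [he, Fintype.prod_prod_type]
          · intro f
            have hf : List.ofFn f = List.ofFn (Fin.init f) ++ [f (Fin.last j)] := by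
              conv_lhs => rw [← Fin.snoc_init_self f]
              rw [ofFn_snoc]
            refine Finset.prod_congr rfl fun i _ => ?_
            rw [hf]
            simp only [Fin.snocEquiv, Equiv.coe_fn_symm_mk]
            rfl
      _ = ∏ c : Fin d, ∏ j ∈ Finset.range k, ∏ g : Fin j → Fin d, ∏ i : Fin d,
            transM q p (ℓ (List.ofFn g ++ [c])) (ℓ ((i :: List.ofFn g) ++ [c])) :=
          Finset.prod_comm
      _ = ∏ c : Fin d, ∏ j ∈ Finset.range k, ∏ g : Fin j → Fin d, ∏ i : Fin d,
            transM q p ((fun v => ℓ (v ++ [c])) (List.ofFn g))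
              ((fun v => ℓ (v ++ [c])) (i :: List.ofFn g)) := rfl

lemma Qprod_eval : ∀ (k : ℕ) (t : Lab q d k),
    Qprod q d p k (evalL q d k t) = vW q d p k (rootL q d k t) t
  | 0, t => by
    unfold Qprod vW
    simp [rootL]
  | (k+1), t => by
    obtain ⟨a, f⟩ : Fin q × (Fin d → Lab q d k) := t
    have hnil : evalL q d (k+1) (a, f) List.nil = a := evalL_nil q d (k+1) (a, f)
    have hsub : ∀ c : Fin d, (fun v => evalL q d (k+1) (a, f) (v ++ [c])) = evalL q d k (f c) :=
      fun c => funext fun v => evalL_append q d k (a, f) v c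
    rw [Qprod_succ]
    have h1 : ∀ c : Fin d, evalL q d (k+1) (a, f) ([c]) = rootL q d k (f c) := by
      intro c
      have : ([c] : List (Fin d)) = [] ++ [c] := rfl
      rw [this]
      exact (evalL_append q d k (a, f) [] c).trans (evalL_nil q d k (f c))
    calc (∏ c : Fin d, transM q p (evalL q d (k+1) (a, f) List.nil)
            (evalL q d (k+1) (a, f) ([c])))
          * ∏ c : Fin d, Qprod q d p k (fun v => evalL q d (k+1) (a, f) (v ++ [c]))
        = (∏ c : Fin d, transM q p a (rootL q d k (f c)))
          * ∏ c : Fin d, vW q d p k (rootL q d k (f c)) (f c) := by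
          congr 1
          · exact Finset.prod_congr rfl fun c _ => by rw [hnil, h1 c]
          · refine Finset.prod_congr rfl fun c _ => ?_
            rw [hsub c]
            exact Qprod_eval k (f c)
      _ = vW q d p (k+1) (rootL q d (k+1) (a, f)) (a, f) := by
          show _ = (if a = a then (1:ℝ) else 0) * ∏ c : Fin d,
            (transM q p a (rootL q d k (f c)) * vW q d p k (rootL q d k (f c)) (f c))
          rw [if_pos rfl, one_mul, ← Finset.prod_mul_distrib]

noncomputable def leafmaj [NeZero q] : ∀ k, ((Fin k → Fin d) → Fin q) → Fin q
  | 0, x => x Fin.elim0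
  | (k+1), x => plur q d (fun c => leafmaj k (fun g => x (Fin.snoc g c)))

lemma leafmaj_theta [NeZero q] : ∀ (k : ℕ) (ℓ : List (Fin d) → Fin q),
    leafmaj q d k (fun f => ℓ (List.ofFn f)) = maj q d k (theta q d k ℓ)
  | 0, ℓ => by
    show ℓ (List.ofFn Fin.elim0) = theta q d 0 ℓ
    rw [List.ofFn_zero]
    rfl
  | (k+1), ℓ => by
    show plur q d (fun c => leafmaj q d k (fun g => ℓ (List.ofFn (Fin.snoc g c)))) = _
    have h1 : ∀ c : Fin d, leafmaj q d k (fun g => ℓ (List.ofFn (Fin.snoc g c)))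
        = maj q d k (theta q d k (fun v => ℓ (v ++ [c]))) := by
      intro c
      have : (fun g : Fin k → Fin d => ℓ (List.ofFn (Fin.snoc g c)))
          = (fun g : Fin k → Fin d => (fun v => ℓ (v ++ [c])) (List.ofFn g)) := by
        funext g
        rw [ofFn_snoc]
      rw [this]
      exact leafmaj_theta k (fun v => ℓ (v ++ [c]))
    show _ = plur q d (fun c => maj q d k ((theta q d (k+1) ℓ).2 c))
    congr 1
    funext c
    exact h1 c

end Model

lemma integrable_sup' {Ω : Type} [MeasurableSpace Ω] (μ : MeasureTheory.Measure Ω) {ι : Type*}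
    (f : ι → Ω → ℝ) (hf : ∀ i, MeasureTheory.Integrable (f i) μ) (s : Finset ι)
    (hs : s.Nonempty) :
    MeasureTheory.Integrable (fun ω => s.sup' hs (fun i => f i ω)) μ := by
  induction hs using Finset.Nonempty.cons_induction with
  | singleton a => simpa using hf a
  | cons a s ha hs ih =>
    have : (fun ω => (Finset.cons a s ha).sup' (Finset.cons_nonempty ha) (fun i => f i ω))
        = fun ω => f a ω ⊔ s.sup' hs (fun i => f i ω) := by
      funext ω
      exact Finset.sup'_cons hs (fun i => f i ω)
    rw [this]
    exact (hf a).sup ih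

end BIM

/-- Iterated-majority bound: there is a constant `C(q)` such that if
`λ²d > C(q)` and `p < 0.01`, then there is `k₀ = k₀(d, λ, q)` so that for all `k ≥ k₀`,
`E_k ≥ 1 − 2(1−λ)(q−1)/(q(0.16d − λ))`. -/
theorem broadcast_iterated_majority (q : ℕ) (hq : 3 ≤ q) :
    ∃ C : ℝ, 0 < C ∧
      ∀ (d : ℕ), 1 ≤ d →
      ∀ (p : ℝ), 0 < p → p < 1 →
      ∀ (Ω : Type) [MeasurableSpace Ω] (μ : Measure Ω) [IsProbabilityMeasure μ]
        (σ : List (Fin d) → Ω → Fin q), (∀ v, Measurable (σ v)) →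
        (∀ (k : ℕ) (ℓ : List (Fin d) → Fin q),
          (μ {ω | ∀ v : List (Fin d), v.length ≤ k → σ v ω = ℓ v}).toReal
            = ((q : ℝ))⁻¹ * ∏ j ∈ Finset.range k, ∏ f : Fin j → Fin d, ∏ i : Fin d,
                transM q p (ℓ (List.ofFn f)) (ℓ (i :: List.ofFn f))) →
      ∀ (lam : ℝ), lam = 1 - p * q / ((q : ℝ) - 1) →
        lam ^ 2 * d > C → p < 0.01 →
        ∃ k₀ : ℕ, ∀ k : ℕ, k₀ ≤ k →
          optRecon μ (σ []) σ k
            ≥ 1 - 2 * (1 - lam) * ((q : ℝ) - 1) / ((q : ℝ) * (0.16 * d - lam)) := by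
  refine ⟨1000, by norm_num, ?_⟩
  intro d hd1 p hp0 hp1 Ω mΩ μ instP σ hmeas hlaw lam hlamdef hgt hp001
  haveI : NeZero q := ⟨by omega⟩
  have hqR : (3:ℝ) ≤ (q:ℝ) := by exact_mod_cast hq
  have hq1 : (0:ℝ) < (q:ℝ) - 1 := by linarith
  have hq0 : (0:ℝ) < (q:ℝ) := by linarith
  have hfrac_pos : 0 < p * (q:ℝ) / ((q:ℝ) - 1) := by positivity
  have hfrac_le : p * (q:ℝ) / ((q:ℝ) - 1) ≤ 1.5 * p := by
    rw [div_le_iff₀ hq1]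
    nlinarith
  have hlam1 : lam ≤ 1 := by rw [hlamdef]; linarith
  have hlam0 : (0.98:ℝ) < lam := by rw [hlamdef]; linarith
  have hdR : (1000:ℝ) < (d:ℝ) := by
    have hd0 : (0:ℝ) ≤ (d:ℝ) := Nat.cast_nonneg d
    nlinarith
  have hDpos : (0:ℝ) < 0.16*(d:ℝ) - lam := (BIM.numer _ p lam hdR hp0 hp001 hlam0 hlam1).1
  set E : ℝ := 2*p/(0.16*(d:ℝ) - lam) with hEdef
  have hEeq : 2 * (1 - lam) * ((q:ℝ) - 1) / ((q:ℝ) * (0.16 * (d:ℝ) - lam)) = E := by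
    have h1ml : 1 - lam = p * (q:ℝ) / ((q:ℝ) - 1) := by rw [hlamdef]; ring
    rw [hEdef, h1ml, div_eq_div_iff (ne_of_gt (mul_pos hq0 hDpos)) (ne_of_gt hDpos)]
    have hq1' : ((q:ℝ) - 1) ≠ 0 := ne_of_gt hq1
    field_simp
  refine ⟨0, fun k _ => ?_⟩
  rw [ge_iff_le, hEeq]
  -- setup
  let π : Ω → ((Fin k → Fin d) → Fin q) :=
    fun ω => fun f : Fin k → Fin d => σ (List.ofFn f) ω
  have hπ : Measurable π := measurable_pi_lambda _ (fun f => hmeas _)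
  have hG : leafAlg σ k ≤ mΩ := hπ.comap_le
  have measB : ∀ S : Set ((Fin k → Fin d) → Fin q), MeasurableSet S := by
    intro S
    have hsing : ∀ x : (Fin k → Fin d) → Fin q, MeasurableSet ({x} : Set ((Fin k → Fin d) → Fin q)) := by
      intro x
      have hx : ({x} : Set ((Fin k → Fin d) → Fin q))
          = ⋂ f : Fin k → Fin d, (fun y : (Fin k → Fin d) → Fin q => y f) ⁻¹' {x f} := by
        ext y
        simp [funext_iff]
      rw [hx]
      exact MeasurableSet.iInter fun f => (measurable_pi_apply f) (measurableSet_singleton _)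
    rw [← Set.biUnion_of_singleton S]
    exact MeasurableSet.biUnion (Set.to_countable S) (fun x _ => hsing x)
  let Tf : Ω → Fin q := fun ω => BIM.leafmaj q d k (π ω)
  have hTset : ∀ i : Fin q, MeasurableSet[leafAlg σ k] {ω | Tf ω = i} := by
    intro i
    exact ⟨{x | BIM.leafmaj q d k x = i}, measB _, rfl⟩
  have hTm : ∀ i, MeasurableSet {ω | Tf ω = i} := fun i => hG _ (hTset i)
  let post : Fin q → Ω → ℝ := fun i => posterior μ (σ []) σ i k
  have hPostInt : ∀ i, Integrable (post i) μ := fun i => integrable_condExp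
  have hrootmeas : ∀ i : Fin q, MeasurableSet {ω | σ [] ω = i} :=
    fun i => hmeas [] (measurableSet_singleton i)
  have hIndInt : ∀ i : Fin q,
      Integrable (Set.indicator {ω | σ [] ω = i} (fun _ => (1:ℝ))) μ :=
    fun i => (integrable_const (1:ℝ)).indicator (hrootmeas i)
  let h : Ω → ℝ := fun ω => ∑ i : Fin q, ({ω' | Tf ω' = i}.indicator (post i)) ω
  have hhdef : h = fun ω => ∑ i : Fin q, ({ω' | Tf ω' = i}.indicator (post i)) ω := rfl
  have hhInt : Integrable h μ := by
    apply integrable_finset_sum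
    intro i _
    exact (hPostInt i).indicator (hTm i)
  have hne : (Finset.univ : Finset (Fin q)).Nonempty := Finset.univ_nonempty
  have hsupInt : Integrable (fun ω => ⨆ i : Fin q, post i ω) μ := by
    have heq : (fun ω => ⨆ i : Fin q, post i ω)
        = fun ω => Finset.univ.sup' hne (fun i => post i ω) := by
      funext ω
      exact (Finset.sup'_univ_eq_ciSup (fun i => post i ω)).symm
    rw [heq]
    exact BIM.integrable_sup' μ post hPostInt _ hne
  have hle : h ≤ fun ω => ⨆ i : Fin q, post i ω := by
    intro ω
    have h1 : h ω = post (Tf ω) ω := by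
      rw [hhdef]
      simp only [Set.indicator_apply, Set.mem_setOf_eq]
      rw [Finset.sum_ite_eq]
      simp
    rw [h1]
    show post (Tf ω) ω ≤ ⨆ i : Fin q, post i ω
    exact le_ciSup (Set.Finite.bddAbove (Set.finite_range (fun i : Fin q => post i ω))) (Tf ω)
  have step1 : ∫ ω, h ω ∂μ ≤ optRecon μ (σ []) σ k := integral_mono hhInt hsupInt hle
  have step2 : ∫ ω, h ω ∂μ
      = ∑ i : Fin q, (μ ({ω | Tf ω = i} ∩ {ω | σ [] ω = i})).toReal := by
    rw [hhdef, integral_finset_sum _ (fun i _ => (hPostInt i).indicator (hTm i))]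
    refine Finset.sum_congr rfl fun i _ => ?_
    rw [integral_indicator (hTm i)]
    have hpi : post i
        = μ[Set.indicator {ω | σ [] ω = i} (fun _ => (1:ℝ))|leafAlg σ k] := rfl
    rw [hpi]
    rw [setIntegral_condExp hG (hIndInt i) (hTset i)]
    rw [← integral_indicator (hTm i), Set.indicator_indicator,
      integral_indicator ((hTm i).inter (hrootmeas i)), setIntegral_const, smul_eq_mul,
      mul_one]
    rfl
  have step3 : ∑ i : Fin q, (μ ({ω | Tf ω = i} ∩ {ω | σ [] ω = i})).toReal
      = (μ {ω | Tf ω = σ [] ω}).toReal := by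
    have hunion : {ω | Tf ω = σ [] ω}
        = ⋃ i : Fin q, ({ω | Tf ω = i} ∩ {ω | σ [] ω = i}) := by
      ext ω
      simp only [Set.mem_setOf_eq, Set.mem_iUnion, Set.mem_inter_iff]
      constructor
      · intro hh
        exact ⟨σ [] ω, hh, rfl⟩
      · rintro ⟨i, h1, h2⟩
        rw [h1, h2]
    have hdisj : Pairwise (Function.onFun Disjoint
        (fun i : Fin q => {ω | Tf ω = i} ∩ {ω | σ [] ω = i})) := by
      intro i j hij
      refine Set.disjoint_left.mpr ?_
      rintro ω ⟨ha, _⟩ ⟨hb, _⟩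
      exact hij (ha.symm.trans hb)
    rw [hunion, measure_iUnion hdisj (fun i => (hTm i).inter (hrootmeas i)), tsum_fintype,
      ENNReal.toReal_sum (fun i _ => measure_ne_top μ _)]
  -- bridge to the finite model
  let Θσ : Ω → BIM.Lab q d k := fun ω => BIM.theta q d k (fun v => σ v ω)
  have hTmaj : ∀ ω, Tf ω = BIM.maj q d k (Θσ ω) :=
    fun ω => BIM.leafmaj_theta q d k (fun v => σ v ω)
  have hrootΘ : ∀ ω, σ [] ω = BIM.rootL q d k (Θσ ω) :=
    fun ω => (BIM.rootL_theta q d k (fun v => σ v ω)).symm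
  have hEt_val : ∀ t : BIM.Lab q d k, (μ (Θσ ⁻¹' {t})).toReal
      = (q:ℝ)⁻¹ * BIM.vW q d p k (BIM.rootL q d k t) t := by
    intro t
    have hset : Θσ ⁻¹' {t}
        = {ω | ∀ v : List (Fin d), v.length ≤ k → σ v ω = BIM.evalL q d k t v} := by
      ext ω
      simp only [Set.mem_preimage, Set.mem_singleton_iff, Set.mem_setOf_eq]
      exact BIM.theta_eq_iff q d k _ t
    rw [hset, hlaw k (BIM.evalL q d k t)]
    congr 1
    exact BIM.Qprod_eval q d p k t
  have hEt_meas : ∀ t : BIM.Lab q d k, MeasurableSet (Θσ ⁻¹' {t}) := by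
    intro t
    have hset : Θσ ⁻¹' {t}
        = ⋂ v : List (Fin d), {ω | v.length ≤ k → σ v ω = BIM.evalL q d k t v} := by
      ext ω
      simp only [Set.mem_preimage, Set.mem_singleton_iff, Set.mem_iInter, Set.mem_setOf_eq]
      exact BIM.theta_eq_iff q d k _ t
    rw [hset]
    refine MeasurableSet.iInter fun v => ?_
    by_cases hv : v.length ≤ k
    · have : {ω | v.length ≤ k → σ v ω = BIM.evalL q d k t v}
          = σ v ⁻¹' {BIM.evalL q d k t v} := by
        ext ω
        simp [hv]
      rw [this]
      exact hmeas v (measurableSet_singleton _)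
    · have : {ω | v.length ≤ k → σ v ω = BIM.evalL q d k t v} = Set.univ := by
        ext ω
        simp [hv]
      rw [this]
      exact MeasurableSet.univ
  have hGoodEq : {ω | Tf ω = σ [] ω}
      = ⋃ t ∈ Finset.univ.filter
          (fun t => BIM.maj q d k t = BIM.rootL q d k t), Θσ ⁻¹' {t} := by
    ext ω
    simp only [Set.mem_setOf_eq, Set.mem_iUnion, Finset.mem_filter, Finset.mem_univ, true_and,
      Set.mem_preimage, Set.mem_singleton_iff]
    constructor
    · intro hh
      refine ⟨Θσ ω, ?_, rfl⟩
      rw [← hTmaj ω, ← hrootΘ ω]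
      exact hh
    · rintro ⟨t, hmaj2, hΘ2⟩
      rw [hTmaj ω, hrootΘ ω, hΘ2]
      exact hmaj2
  have hGoodVal : (μ {ω | Tf ω = σ [] ω}).toReal
      = ∑ t ∈ Finset.univ.filter (fun t => BIM.maj q d k t = BIM.rootL q d k t),
          (q:ℝ)⁻¹ * BIM.vW q d p k (BIM.rootL q d k t) t := by
    have hdisj : Set.PairwiseDisjoint
        (↑(Finset.univ.filter (fun t => BIM.maj q d k t = BIM.rootL q d k t)))
        (fun t : BIM.Lab q d k => Θσ ⁻¹' {t}) := by
      intro t1 _ t2 _ h12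
      refine Set.disjoint_left.mpr ?_
      rintro ω ha hb
      exact h12 ((Set.mem_singleton_iff.mp ha).symm.trans (Set.mem_singleton_iff.mp hb))
    rw [hGoodEq, measure_biUnion_finset hdisj (fun t _ => hEt_meas t),
      ENNReal.toReal_sum (fun t _ => measure_ne_top μ _)]
    exact Finset.sum_congr rfl fun t _ => hEt_val t
  have hmodel : 1 - E ≤ ∑ t ∈ Finset.univ.filter
      (fun t => BIM.maj q d k t = BIM.rootL q d k t),
      (q:ℝ)⁻¹ * BIM.vW q d p k (BIM.rootL q d k t) t := by
    have her := BIM.er_le q d p hq hdR hp0 hp001 lam hlam0 hlam1 k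
    have hmm := BIM.model_main q d p hq hp0 hp1 k E her
    rw [Finset.sum_filter]
    exact hmm
  linarith [step1, step2, step3, hGoodVal, hmodel]
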